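/- Let ω > 0 and let λ be a nonzero complex number such that either Re(λ) < 0, or Re(λ) = 0 and |λ| > ω. Then i·( log(−iω − λ) − log(iω − λ) ) = −2·atan(ω/λ). -/

import Mathlib

open Complex

/-- Principal complex arctangent: `atan z = (1/(2i))·(log(1+iz) − log(1−iz))`,
where `log` is the principal branch of the complex logarithm. -/
noncomputable def catan (z : ℂ) : ℂ :=
  (2 * Complex.I)⁻¹ * (Complex.log (1 + Complex.I * z) - Complex.log (1 - Complex.I * z))
theorem stmt_8 (ω : ℝ) (hω : 0 < ω) (lam : ℂ) (hlam : lam ≠ 0)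
    (h : lam.re < 0 ∨ (lam.re = 0 ∧ ω < ‖lam‖)) :
    Complex.I * (Complex.log (-(Complex.I * (ω : ℂ)) - lam)
      - Complex.log (Complex.I * (ω : ℂ) - lam)) = -2 * catan ((ω : ℂ) / lam) := by
  have hN : 0 < Complex.normSq lam := normSq_pos.mpr hlam
  set u : ℂ := 1 + Complex.I * ((ω : ℂ) / lam) with hu
  set v : ℂ := 1 - Complex.I * ((ω : ℂ) / lam) with hv
  have hure : u.re = 1 + ω * lam.im / Complex.normSq lam := by
    simp [hu, Complex.div_re, Complex.div_im, Complex.mul_re, Complex.mul_im]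
  have huim : u.im = ω * lam.re / Complex.normSq lam := by
    simp [hu, Complex.div_re, Complex.div_im, Complex.mul_re, Complex.mul_im]
  have hvre : v.re = 1 - ω * lam.im / Complex.normSq lam := by
    simp [hv, Complex.div_re, Complex.div_im, Complex.mul_re, Complex.mul_im]
  have hvim : v.im = -(ω * lam.re / Complex.normSq lam) := by
    simp [hv, Complex.div_re, Complex.div_im, Complex.mul_re, Complex.mul_im]
  have hneg : -lam ≠ 0 := neg_ne_zero.mpr hlam
  have h1 : (-lam) * u = -(Complex.I * (ω : ℂ)) - lam := by
    rw [hu]; field_simp; ring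
  have h2 : (-lam) * v = Complex.I * (ω : ℂ) - lam := by
    rw [hv]; field_simp; ring
  have pi_pos := Real.pi_pos
  have main : u ≠ 0 ∧ v ≠ 0 ∧
      ((-lam).arg + u.arg ∈ Set.Ioc (-Real.pi) Real.pi) ∧
      ((-lam).arg + v.arg ∈ Set.Ioc (-Real.pi) Real.pi) := by
    rcases h with hre | ⟨hre, habs⟩
    · have huim' : u.im < 0 := by
        rw [huim]; exact div_neg_of_neg_of_pos (mul_neg_of_pos_of_neg hω hre) hN
      have hvim' : 0 < v.im := by
        rw [hvim]
        exact neg_pos.mpr (div_neg_of_neg_of_pos (mul_neg_of_pos_of_neg hω hre) hN)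
      have hu0 : u ≠ 0 := fun hz => by simp [hz] at huim'
      have hv0 : v ≠ 0 := fun hz => by simp [hz] at hvim'
      have hnre : 0 < (-lam).re := by rw [Complex.neg_re]; linarith
      have hargl := abs_lt.mp (abs_arg_lt_pi_div_two_iff.mpr (Or.inl hnre))
      have hau_neg : u.arg < 0 := Complex.arg_neg_iff.mpr huim'
      have hav_nonneg : 0 ≤ v.arg := Complex.arg_nonneg_iff.mpr hvim'.le
      have hav_lt_pi : v.arg < Real.pi := Complex.arg_lt_pi_iff.mpr (Or.inr hvim'.ne')
      refine ⟨hu0, hv0, ⟨?_, by linarith [hargl.2]⟩, ⟨by linarith [hargl.1], ?_⟩⟩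
      · rcases le_or_gt 0 lam.im with him | him
        · have hure' : 0 < u.re := by
            rw [hure]
            have : 0 ≤ ω * lam.im / Complex.normSq lam := by positivity
            linarith
          have := abs_lt.mp (abs_arg_lt_pi_div_two_iff.mpr (Or.inl hure'))
          linarith [hargl.1, this.1]
        · have : 0 ≤ (-lam).arg := Complex.arg_nonneg_iff.mpr (by rw [Complex.neg_im]; linarith)
          linarith [neg_pi_lt_arg u]
      · rcases le_or_gt 0 lam.im with him | him
        · have hnl_le : (-lam).arg ≤ 0 := by
            rcases eq_or_lt_of_le him with him' | him'
            · have : (-lam).arg = 0 := Complex.arg_eq_zero_iff.mpr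
                ⟨hnre.le, by rw [Complex.neg_im, ← him']; ring⟩
              linarith [this.le]
            · exact (Complex.arg_neg_iff.mpr (by rw [Complex.neg_im]; linarith)).le
          linarith
        · have hvre' : 0 < v.re := by
            rw [hvre]
            have : ω * lam.im / Complex.normSq lam < 0 :=
              div_neg_of_neg_of_pos (mul_neg_of_pos_of_neg hω him) hN
            linarith
          have := abs_lt.mp (abs_arg_lt_pi_div_two_iff.mpr (Or.inl hvre'))
          linarith [hargl.2, this.2]
    · have him0 : lam.im ≠ 0 := fun hz =>
        hlam (Complex.ext (by simp [hre]) (by simp [hz]))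
      have habsim : ‖lam‖ = |lam.im| := by
        rw [Complex.norm_def, Complex.normSq_apply, hre]
        rw [show (0:ℝ)*0 + lam.im*lam.im = lam.im^2 by ring, Real.sqrt_sq_eq_abs]
      rw [habsim] at habs
      have hNe : Complex.normSq lam = lam.im ^ 2 := by
        rw [Complex.normSq_apply, hre]; ring
      have hq : |ω * lam.im / Complex.normSq lam| < 1 := by
        rw [hNe, abs_div, abs_mul, abs_of_pos hω, _root_.abs_pow]
        rw [div_lt_one (by positivity)]
        nlinarith [abs_pos.mpr him0, abs_mul_abs_self lam.im]
      have hq' := abs_lt.mp hq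
      have hure' : 0 < u.re := by rw [hure]; linarith [hq'.1]
      have hvre' : 0 < v.re := by rw [hvre]; linarith [hq'.2]
      have huim0 : u.im = 0 := by rw [huim, hre]; simp
      have hvim0 : v.im = 0 := by rw [hvim, hre]; simp
      have hau : u.arg = 0 := Complex.arg_eq_zero_iff.mpr ⟨hure'.le, huim0⟩
      have hav : v.arg = 0 := Complex.arg_eq_zero_iff.mpr ⟨hvre'.le, hvim0⟩
      refine ⟨fun hz => by simp [hz] at hure', fun hz => by simp [hz] at hvre', ?_, ?_⟩ <;>
        simp [hau, hav, Set.mem_Ioc] <;>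
        exact ⟨neg_pi_lt_arg _, arg_le_pi _⟩
  obtain ⟨hu0, hv0, m1, m2⟩ := main
  have key : Complex.log (-(Complex.I * (ω:ℂ)) - lam) - Complex.log (Complex.I * (ω:ℂ) - lam)
      = Complex.log u - Complex.log v := by
    rw [← h1, ← h2, Complex.log_mul hneg hu0 m1, Complex.log_mul hneg hv0 m2]
    ring
  rw [key, catan, ← hu, ← hv]
  have hI : (Complex.I : ℂ) ≠ 0 := I_ne_zero
  field_simp
  ring_nf
  simp [Complex.I_sq]
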